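/- (Lemma 3.1, pointwise form) Let g̃ ∈ C²(Ω') ∩ C(closure(Ω')) be strictly positive and bounded on closure(Ω') and satisfy Σ_{i,j} ∂_j(a_{ij} ∂_i g̃) + 2(C + ‖c‖_∞) g̃ − Σ_i b_i ∂_i g̃ ≤ 0 in Ω'. Set g = g̃^{−1}. Let e ∈ C²(Ω') be bounded and satisfy −Σ_{i,j} ∂_j(a_{ij} ∂_i e) + Σ_i b_i ∂_i e + c e = F(x,u₁) − F(x,u₂) in Ω', where e = u₁ − u₂. Then Φ = e² g satisfies, pointwise in Ω', −Σ_{i,j} ∂_j(a_{ij} ∂_i Φ) + Σ_i c_i ∂_i Φ ≤ 0, where c_i = b_i + 2 Σ_j a_{ij} (∂_j g)/g. -/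

import Mathlib

open Real Set

noncomputable def pd {n : ℕ} (i : Fin n) (u : (Fin n → ℝ) → ℝ) (x : Fin n → ℝ) : ℝ :=
  fderiv ℝ u x (Pi.single i 1)

variable {n : ℕ}

lemma pd_congr {i : Fin n} {u v : (Fin n → ℝ) → ℝ} (h : ∀ y, u y = v y) (x : Fin n → ℝ) :
    pd i u x = pd i v x := by
  rw [funext h]

lemma pd_add {i : Fin n} {u v : (Fin n → ℝ) → ℝ} {x : Fin n → ℝ}
    (hu : DifferentiableAt ℝ u x) (hv : DifferentiableAt ℝ v x) :
    pd i (fun y => u y + v y) x = pd i u x + pd i v x := by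
  simp [pd, fderiv_fun_add hu hv]

lemma pd_mul {i : Fin n} {u v : (Fin n → ℝ) → ℝ} {x : Fin n → ℝ}
    (hu : DifferentiableAt ℝ u x) (hv : DifferentiableAt ℝ v x) :
    pd i (fun y => u y * v y) x = pd i u x * v x + u x * pd i v x := by
  simp [pd, fderiv_fun_mul hu hv]; ring

lemma pd_sum {i : Fin n} {ι : Type*} (s : Finset ι) (f : ι → (Fin n → ℝ) → ℝ) {x : Fin n → ℝ}
    (h : ∀ k ∈ s, DifferentiableAt ℝ (f k) x) :
    pd i (fun y => ∑ k ∈ s, f k y) x = ∑ k ∈ s, pd i (f k) x := by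
  simp [pd, fderiv_fun_sum h]

lemma contDiff_pd (i : Fin n) {u : (Fin n → ℝ) → ℝ} (hu : ContDiff ℝ 2 u) :
    ContDiff ℝ 1 fun y => pd i u y := by
  exact (hu.fderiv_right (m := 1) (by norm_num)).clm_apply contDiff_const

lemma diffAt_pd (i : Fin n) {u : (Fin n → ℝ) → ℝ} (hu : ContDiff ℝ 2 u) (x : Fin n → ℝ) :
    DifferentiableAt ℝ (fun y => pd i u y) x :=
  ((contDiff_pd i hu).differentiable (by norm_num)).differentiableAt

lemma Lop_mul (a : Fin n → Fin n → (Fin n → ℝ) → ℝ)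
    (ha : ∀ i j, ContDiff ℝ 2 (a i j)) (hsymm : ∀ i j x, a i j x = a j i x)
    {u v : (Fin n → ℝ) → ℝ} (hu : ContDiff ℝ 2 u) (hv : ContDiff ℝ 2 v) (x : Fin n → ℝ) :
    ∑ j, pd j (fun y => ∑ i, a i j y * pd i (fun z => u z * v z) y) x
    = u x * (∑ j, pd j (fun y => ∑ i, a i j y * pd i v y) x)
      + v x * (∑ j, pd j (fun y => ∑ i, a i j y * pd i u y) x)
      + 2 * ∑ i, ∑ j, a i j x * pd i u x * pd j v x := by
  have hud : ∀ y, DifferentiableAt ℝ u y := fun y =>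
    (hu.differentiable (by norm_num)).differentiableAt
  have hvd : ∀ y, DifferentiableAt ℝ v y := fun y =>
    (hv.differentiable (by norm_num)).differentiableAt
  have had : ∀ i j y, DifferentiableAt ℝ (a i j) y := fun i j y =>
    ((ha i j).differentiable (by norm_num)).differentiableAt
  -- differentiability of the flux pieces
  have hfl : ∀ (w : (Fin n → ℝ) → ℝ), ContDiff ℝ 2 w → ∀ i j (y : Fin n → ℝ),
      DifferentiableAt ℝ (fun z => a i j z * pd i w z) y := fun w hw i j y =>
    (had i j y).mul (diffAt_pd i hw y)
  -- step 1: rewrite each outer term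
  have key : ∀ j, pd j (fun y => ∑ i, a i j y * pd i (fun z => u z * v z) y) x
      = ∑ i, (pd j (fun z => a i j z * pd i u z) x * v x
              + (a i j x * pd i u x) * pd j v x
              + (pd j u x * (a i j x * pd i v x)
              + u x * pd j (fun z => a i j z * pd i v z) x)) := by
    intro j
    have e1 : pd j (fun y => ∑ i, a i j y * pd i (fun z => u z * v z) y) x
        = pd j (fun y => ∑ i, ((fun z => a i j z * pd i u z) y * v y
            + u y * ((fun z => a i j z * pd i v z) y))) x := by
      refine pd_congr (fun y => Finset.sum_congr rfl fun i _ => ?_) x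
      rw [pd_mul (hud y) (hvd y)]; ring
    rw [e1, pd_sum]
    · refine Finset.sum_congr rfl fun i _ => ?_
      rw [pd_add ((hfl u hu i j x).fun_mul (hvd x)) ((hud x).fun_mul (hfl v hv i j x)),
        pd_mul (hfl u hu i j x) (hvd x), pd_mul (hud x) (hfl v hv i j x)]
    · exact fun i _ => ((hfl u hu i j x).mul (hvd x)).add ((hud x).mul (hfl v hv i j x))
  calc ∑ j, pd j (fun y => ∑ i, a i j y * pd i (fun z => u z * v z) y) x
      = ∑ j, ∑ i, (pd j (fun z => a i j z * pd i u z) x * v x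
              + (a i j x * pd i u x) * pd j v x
              + (pd j u x * (a i j x * pd i v x)
              + u x * pd j (fun z => a i j z * pd i v z) x)) := by
        exact Finset.sum_congr rfl fun j _ => key j
    _ = u x * (∑ j, pd j (fun y => ∑ i, a i j y * pd i v y) x)
      + v x * (∑ j, pd j (fun y => ∑ i, a i j y * pd i u y) x)
      + 2 * ∑ i, ∑ j, a i j x * pd i u x * pd j v x := by
        have hLu : ∀ j, pd j (fun y => ∑ i, a i j y * pd i u y) x
            = ∑ i, pd j (fun z => a i j z * pd i u z) x := fun j =>
          pd_sum _ _ (fun i _ => hfl u hu i j x)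
        have hLv : ∀ j, pd j (fun y => ∑ i, a i j y * pd i v y) x
            = ∑ i, pd j (fun z => a i j z * pd i v z) x := fun j =>
          pd_sum _ _ (fun i _ => hfl v hv i j x)
        have hswap : (∑ j : Fin n, ∑ i : Fin n, pd j u x * (a i j x * pd i v x))
            = ∑ i : Fin n, ∑ j : Fin n, a i j x * pd i u x * pd j v x := by
          refine Finset.sum_congr rfl fun i _ => Finset.sum_congr rfl fun j _ => ?_
          rw [hsymm]; ring
        have hcomm : (∑ j : Fin n, ∑ i : Fin n, a i j x * pd i u x * pd j v x)
            = ∑ i : Fin n, ∑ j : Fin n, a i j x * pd i u x * pd j v x :=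
          Finset.sum_comm
        have h1 : (∑ j : Fin n, ∑ i : Fin n, pd j (fun z => a i j z * pd i u z) x * v x)
            = v x * ∑ j : Fin n, ∑ i : Fin n, pd j (fun z => a i j z * pd i u z) x := by
          simp only [← Finset.sum_mul]; rw [mul_comm]
        have h4 : (∑ j : Fin n, ∑ i : Fin n, u x * pd j (fun z => a i j z * pd i v z) x)
            = u x * ∑ j : Fin n, ∑ i : Fin n, pd j (fun z => a i j z * pd i v z) x := by
          simp only [← Finset.mul_sum]
        have expand : (∑ j : Fin n, ∑ i : Fin n,
              (pd j (fun z => a i j z * pd i u z) x * v x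
              + (a i j x * pd i u x) * pd j v x
              + (pd j u x * (a i j x * pd i v x)
              + u x * pd j (fun z => a i j z * pd i v z) x)))
            = (∑ j : Fin n, ∑ i : Fin n, pd j (fun z => a i j z * pd i u z) x * v x)
            + (∑ j : Fin n, ∑ i : Fin n, a i j x * pd i u x * pd j v x)
            + ((∑ j : Fin n, ∑ i : Fin n, pd j u x * (a i j x * pd i v x))
            + (∑ j : Fin n, ∑ i : Fin n, u x * pd j (fun z => a i j z * pd i v z) x)) := by
          simp [Finset.sum_add_distrib]
        simp only [hLu, hLv]
        rw [expand, h1, h4, hswap, hcomm]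
        ring

set_option maxHeartbeats 1000000 in
/-- (Lemma 3.1, pointwise form) Let `g̃` be strictly positive, bounded and satisfy
`Σ ∂_j(a_{ij} ∂_i g̃) + 2(C + ‖c‖_∞) g̃ − Σ b_i ∂_i g̃ ≤ 0` in `Ω'`, and set `g = g̃⁻¹`.
If `e = u₁ − u₂` is bounded and solves
`−Σ ∂_j(a_{ij} ∂_i e) + Σ b_i ∂_i e + c e = F(x,u₁) − F(x,u₂)` in `Ω'`, then
`Φ = e² g` satisfies `−Σ ∂_j(a_{ij} ∂_i Φ) + Σ c_i ∂_i Φ ≤ 0` pointwise in `Ω'`,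
where `c_i = b_i + 2 Σ_j a_{ij} (∂_j g)/g`. -/
theorem lemma31_pointwise (n : ℕ) (Ω' : Set (Fin n → ℝ))
    (hΩo : IsOpen Ω') (hΩb : Bornology.IsBounded Ω')
    (a : Fin n → Fin n → (Fin n → ℝ) → ℝ) (b : Fin n → (Fin n → ℝ) → ℝ)
    (c : (Fin n → ℝ) → ℝ)
    (ha : ∀ i j, ContDiff ℝ 2 (a i j)) (hb : ∀ i, ContDiff ℝ 2 (b i))
    (hc : ContDiff ℝ 2 c)
    (hsymm : ∀ i j x, a i j x = a j i x)
    (lam Lam : ℝ) (hlam : 0 < lam) (hlL : lam ≤ Lam)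
    (hell : ∀ x ξ : Fin n → ℝ, lam * ∑ i, ξ i ^ 2 ≤ ∑ i, ∑ j, a i j x * ξ i * ξ j)
    (haB : ∀ i j x, |a i j x| ≤ Lam)
    (cnorm : ℝ) (hcB : BddAbove (Set.range fun x => |c x|))
    (hcnorm : cnorm = ⨆ x, |c x|)
    (F : (Fin n → ℝ) → ℝ → ℝ) (C : ℝ) (hC : 0 < C)
    (hF : ∀ x z z', |F x z - F x z'| ≤ C * |z - z'|)
    (gt : (Fin n → ℝ) → ℝ) (hgt : ContDiff ℝ 2 gt)
    (hgtpos : ∀ x, 0 < gt x) (hgtB : ∃ M, ∀ x, gt x ≤ M)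
    (hgteq : ∀ x ∈ Ω',
      (∑ j, pd j (fun y => ∑ i, a i j y * pd i gt y) x)
        + 2 * (C + cnorm) * gt x - ∑ i, b i x * pd i gt x ≤ 0)
    (g : (Fin n → ℝ) → ℝ) (hg : g = fun x => (gt x)⁻¹)
    (u₁ u₂ : (Fin n → ℝ) → ℝ) (hu₁ : ContDiff ℝ 2 u₁) (hu₂ : ContDiff ℝ 2 u₂)
    (e : (Fin n → ℝ) → ℝ) (he : e = fun x => u₁ x - u₂ x)
    (heB : ∃ M, ∀ x, |e x| ≤ M)
    (heq : ∀ x ∈ Ω',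
      -(∑ j, pd j (fun y => ∑ i, a i j y * pd i e y) x)
        + (∑ i, b i x * pd i e x) + c x * e x = F x (u₁ x) - F x (u₂ x))
    (Φ : (Fin n → ℝ) → ℝ) (hΦ : Φ = fun x => (e x) ^ 2 * g x)
    (ci : Fin n → (Fin n → ℝ) → ℝ)
    (hci : ∀ i x, ci i x = b i x + 2 * ∑ j, a i j x * pd j g x / g x) :
    ∀ x ∈ Ω',
      -(∑ j, pd j (fun y => ∑ i, a i j y * pd i Φ y) x)
        + ∑ i, ci i x * pd i Φ x ≤ 0 := by
  intro x hx
  -- regularity facts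
  have he2 : ContDiff ℝ 2 e := by rw [he]; exact hu₁.sub hu₂
  have hee2 : ContDiff ℝ 2 (fun z => e z * e z) := he2.mul he2
  have hg2 : ContDiff ℝ 2 g := by
    rw [hg]; exact hgt.inv (fun y => (hgtpos y).ne')
  have hed : ∀ y, DifferentiableAt ℝ e y := fun y =>
    (he2.differentiable (by norm_num)).differentiableAt
  have heed : ∀ y, DifferentiableAt ℝ (fun z => e z * e z) y := fun y =>
    (hee2.differentiable (by norm_num)).differentiableAt
  have hgd : ∀ y, DifferentiableAt ℝ g y := fun y =>
    (hg2.differentiable (by norm_num)).differentiableAt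
  have hgtd : ∀ y, DifferentiableAt ℝ gt y := fun y =>
    (hgt.differentiable (by norm_num)).differentiableAt
  -- rewrite Φ
  have hΦ2 : Φ = fun z => e z * e z * g z := by
    rw [hΦ]; funext z; ring
  rw [hΦ2]
  -- g * gt = 1
  have hgg : (fun z => g z * gt z) = (fun _ => (1:ℝ)) := funext fun z => by
    rw [hg]; exact inv_mul_cancel₀ (hgtpos z).ne'
  have hgx : g x = (gt x)⁻¹ := by rw [hg]
  -- pointwise derivative facts
  have hpe2 : ∀ i, pd i (fun z => e z * e z) x = 2 * e x * pd i e x := by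
    intro i
    have h := pd_mul (u := e) (v := e) (i := i) (hed x) (hed x)
    rw [h]; ring
  have hpdg : ∀ (i : Fin n) (y : Fin n → ℝ),
      pd i g y = -((gt y)⁻¹ ^ 2) * pd i gt y := by
    intro i y
    have h0 : pd i (fun z => g z * gt z) y = 0 := by
      rw [hgg]; simp [pd]
    rw [pd_mul (hgd y) (hgtd y)] at h0
    have hgy : g y = (gt y)⁻¹ := by rw [hg]
    rw [hgy] at h0
    have hne : gt y ≠ 0 := (hgtpos y).ne'
    field_simp at h0 ⊢
    linarith only [h0]
  -- the three operator identities
  have hA : ∑ j, pd j (fun y => ∑ i, a i j y * pd i (fun z => e z * e z * g z) y) x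
      = (e x * e x) * (∑ j, pd j (fun y => ∑ i, a i j y * pd i g y) x)
        + g x * (∑ j, pd j (fun y => ∑ i, a i j y * pd i (fun z => e z * e z) y) x)
        + 2 * ∑ i, ∑ j, a i j x * pd i (fun z => e z * e z) x * pd j g x :=
    Lop_mul a ha hsymm hee2 hg2 x
  have hB : ∑ j, pd j (fun y => ∑ i, a i j y * pd i (fun z => e z * e z) y) x
      = e x * (∑ j, pd j (fun y => ∑ i, a i j y * pd i e y) x)
        + e x * (∑ j, pd j (fun y => ∑ i, a i j y * pd i e y) x)
        + 2 * ∑ i, ∑ j, a i j x * pd i e x * pd j e x :=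
    Lop_mul a ha hsymm he2 he2 x
  have hC' : ∑ j, pd j (fun y => ∑ i, a i j y * pd i (fun z => g z * gt z) y) x
      = g x * (∑ j, pd j (fun y => ∑ i, a i j y * pd i gt y) x)
        + gt x * (∑ j, pd j (fun y => ∑ i, a i j y * pd i g y) x)
        + 2 * ∑ i, ∑ j, a i j x * pd i g x * pd j gt x :=
    Lop_mul a ha hsymm hg2 hgt x
  have hzero : ∑ j, pd j (fun y => ∑ i, a i j y * pd i (fun _ : Fin n → ℝ => (1:ℝ)) y) x = 0 := by
    have h1 : ∀ j : Fin n, (fun y => ∑ i, a i j y * pd i (fun _ : Fin n → ℝ => (1:ℝ)) y)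
        = (fun _ : Fin n → ℝ => (0:ℝ)) := by
      intro j; funext y; simp [pd]
    simp only [h1]
    simp [pd]
  rw [hgg, hzero] at hC'
  -- rewrite the constant-multiplied sums
  have hS1 : ∑ i, ∑ j, a i j x * pd i (fun z => e z * e z) x * pd j g x
      = (-(2 * e x * (gt x)⁻¹ ^ 2)) * ∑ i, ∑ j, a i j x * pd i e x * pd j gt x := by
    rw [Finset.mul_sum]
    refine Finset.sum_congr rfl fun i _ => ?_
    rw [Finset.mul_sum]
    refine Finset.sum_congr rfl fun j _ => ?_
    rw [hpe2 i, hpdg j x]; ring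
  have hS2 : ∑ i, ∑ j, a i j x * pd i g x * pd j gt x
      = (-((gt x)⁻¹ ^ 2)) * ∑ i, ∑ j, a i j x * pd i gt x * pd j gt x := by
    rw [Finset.mul_sum]
    refine Finset.sum_congr rfl fun i _ => ?_
    rw [Finset.mul_sum]
    refine Finset.sum_congr rfl fun j _ => ?_
    rw [hpdg i x]; ring
  rw [hS1, hgx] at hA
  rw [hS2, hgx] at hC'
  -- pointwise derivative of Φ
  have hpdΦ : ∀ i, pd i (fun z => e z * e z * g z) x
      = 2 * e x * pd i e x * (gt x)⁻¹ - e x * e x * ((gt x)⁻¹ ^ 2 * pd i gt x) := by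
    intro i
    have h := pd_mul (u := fun z => e z * e z) (v := g) (i := i) (heed x) (hgd x)
    rw [h, hpe2 i, hpdg i x, hgx]; ring
  -- simplify ci
  have hci' : ∀ i, ci i x = b i x - 2 * (gt x)⁻¹ * ∑ j, a i j x * pd j gt x := by
    intro i
    rw [hci i x]
    have h1 : ∀ j : Fin n, a i j x * pd j g x / g x
        = (-(gt x)⁻¹) * (a i j x * pd j gt x) := by
      intro j
      rw [hpdg j x, hgx]
      have hne : gt x ≠ 0 := (hgtpos x).ne'
      field_simp
    rw [Finset.sum_congr rfl (fun j _ => h1 j), ← Finset.mul_sum]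
    ring
  -- expand the first-order sum
  have hSC : ∑ i, ci i x * pd i (fun z => e z * e z * g z) x
      = 2 * e x * (gt x)⁻¹ * (∑ i, b i x * pd i e x)
        - e x * e x * (gt x)⁻¹ ^ 2 * (∑ i, b i x * pd i gt x)
        - 4 * e x * (gt x)⁻¹ ^ 2 * (∑ i, ∑ j, a i j x * pd i e x * pd j gt x)
        + 2 * (e x * e x) * (gt x)⁻¹ ^ 3 * (∑ i, ∑ j, a i j x * pd i gt x * pd j gt x) := by
    have hterm : ∀ i : Fin n, ci i x * pd i (fun z => e z * e z * g z) x
        = 2 * e x * (gt x)⁻¹ * (b i x * pd i e x)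
          - e x * e x * (gt x)⁻¹ ^ 2 * (b i x * pd i gt x)
          - 4 * e x * (gt x)⁻¹ ^ 2 * (∑ j, a i j x * pd i e x * pd j gt x)
          + 2 * (e x * e x) * (gt x)⁻¹ ^ 3 * (∑ j, a i j x * pd i gt x * pd j gt x) := by
      intro i
      rw [hci' i, hpdΦ i]
      have e1 : ∑ j, a i j x * pd i e x * pd j gt x
          = pd i e x * ∑ j, a i j x * pd j gt x := by
        rw [Finset.mul_sum]; exact Finset.sum_congr rfl fun j _ => by ring
      have e2 : ∑ j, a i j x * pd i gt x * pd j gt x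
          = pd i gt x * ∑ j, a i j x * pd j gt x := by
        rw [Finset.mul_sum]; exact Finset.sum_congr rfl fun j _ => by ring
      rw [e1, e2]; ring
    rw [Finset.sum_congr rfl (fun i _ => hterm i)]
    simp only [Finset.sum_add_distrib, Finset.sum_sub_distrib, ← Finset.mul_sum]
  rw [hSC]
  -- scalar facts
  have heqx := heq x hx
  have hgtx := hgteq x hx
  have hFdb : |F x (u₁ x) - F x (u₂ x)| ≤ C * |e x| := by
    have h := hF x (u₁ x) (u₂ x)
    have : u₁ x - u₂ x = e x := by rw [he]
    rwa [this] at h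
  have hcb : |c x| ≤ cnorm := hcnorm ▸ le_ciSup hcB x
  have hQEE0 : 0 ≤ ∑ i, ∑ j, a i j x * pd i e x * pd j e x := by
    have h := hell x (fun i => pd i e x)
    have h0 : 0 ≤ lam * ∑ i, (pd i e x) ^ 2 := by positivity
    calc (0:ℝ) ≤ lam * ∑ i, (pd i e x) ^ 2 := h0
      _ ≤ _ := h
  have hginvpos : 0 < (gt x)⁻¹ := inv_pos.2 (hgtpos x)
  have hgG : (gt x)⁻¹ * gt x = 1 := inv_mul_cancel₀ (hgtpos x).ne'
  -- abbreviations
  set E := e x with hE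
  set G := gt x with hG
  set ginv := (gt x)⁻¹ with hginv
  set Fd := F x (u₁ x) - F x (u₂ x) with hFd
  set Le := ∑ j, pd j (fun y => ∑ i, a i j y * pd i e y) x with hLe
  set LG := ∑ j, pd j (fun y => ∑ i, a i j y * pd i gt y) x with hLG
  set Lg := ∑ j, pd j (fun y => ∑ i, a i j y * pd i g y) x with hLgdef
  set Lee := ∑ j, pd j (fun y => ∑ i, a i j y * pd i (fun z => e z * e z) y) x with hLee
  set LPhi := ∑ j, pd j (fun y => ∑ i, a i j y * pd i (fun z => e z * e z * g z) y) x with hLPhi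
  set QEE := ∑ i, ∑ j, a i j x * pd i e x * pd j e x with hQEE
  set QEG := ∑ i, ∑ j, a i j x * pd i e x * pd j gt x with hQEG
  set QGG := ∑ i, ∑ j, a i j x * pd i gt x * pd j gt x with hQGG
  set SBE := ∑ i, b i x * pd i e x with hSBE
  set SBG := ∑ i, b i x * pd i gt x with hSBG
  clear_value E G ginv Fd Le LG Lg Lee LPhi QEE QEG QGG SBE SBG
  -- derive Lg
  have hLg2 : Lg = -(ginv ^ 2) * LG + 2 * ginv ^ 3 * QGG := by
    linear_combination (-(ginv)) * hC' + (-Lg) * hgG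
  -- the main identity
  have hT : -LPhi + (2 * E * ginv * SBE - E * E * ginv ^ 2 * SBG
        - 4 * E * ginv ^ 2 * QEG + 2 * (E * E) * ginv ^ 3 * QGG)
      = E * E * ginv * ginv * (LG - SBG) + 2 * ginv * (E * Fd - c x * (E * E))
        - 2 * ginv * QEE := by
    linear_combination (-1) * hA + (-(ginv)) * hB + (-(E * E)) * hLg2 + (2 * E * ginv) * heqx
  -- the final inequality
  have hfin : E * E * ginv * ginv * (LG - SBG) + 2 * ginv * (E * Fd - c x * (E * E))
      - 2 * ginv * QEE ≤ 0 := by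
    have t3 : LG - SBG ≤ -(2 * (C + cnorm) * G) := by linarith only [hgtx]
    have hnn : 0 ≤ E * E * ginv * ginv := by nlinarith only [mul_self_nonneg (E * ginv)]
    have t4 : E * E * ginv * ginv * (LG - SBG)
        ≤ E * E * ginv * ginv * (-(2 * (C + cnorm) * G)) :=
      mul_le_mul_of_nonneg_left t3 hnn
    have t5 : E * E * ginv * ginv * (-(2 * (C + cnorm) * G))
        = -(2 * (C + cnorm)) * (E * E) * ginv := by
      linear_combination (-(2 * (C + cnorm)) * (E * E) * ginv) * hgG
    have t1 : E * Fd ≤ C * (E * E) := by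
      calc E * Fd ≤ |E * Fd| := le_abs_self _
        _ = |E| * |Fd| := abs_mul _ _
        _ ≤ |E| * (C * |E|) := mul_le_mul_of_nonneg_left hFdb (abs_nonneg _)
        _ = C * (|E| * |E|) := by ring
        _ = C * (E * E) := by rw [abs_mul_abs_self]
    have t2 : -(c x) * (E * E) ≤ cnorm * (E * E) := by
      have h1 : -(c x) ≤ cnorm := by linarith only [neg_abs_le (c x), hcb]
      exact mul_le_mul_of_nonneg_right h1 (mul_self_nonneg E)
    have hginv0 : 0 ≤ ginv := le_of_lt hginvpos
    linarith only [mul_le_mul_of_nonneg_left (add_le_add t1 t2) hginv0,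
      mul_nonneg hginv0 hQEE0, t4, t5]
  linarith only [hT, hfin]
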